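/- Let a, c > 0 and let π : (−π/2, π/2)² → ℝ² be as defined, and assume (π̇¹(α, β, φ), π̇²(α, β, φ)) ≠ (0, 0) for all (α, β, φ) in (−π/2, π/2)² × ℝ. Define Π(α, β, φ) := (π(α, β), arg(π̇¹(α, β, φ) + i·π̇²(α, β, φ))). Then: (a) the spatial component of Π(α, β, φ) equals π(α, β); and (b) for every forward horizontal curve δ(t) = (α(t), β(t), φ(t)) on W₂ (in coordinates), the curve t ↦ Π(δ(t)) = (x(t), y(t), θ(t)) satisfies x'(t) = r(t) cos θ(t) and y'(t) = r(t) sin θ(t) for the positive continuous function r(t) = c¹(t) · |(π̇¹, π̇²)(α(t), β(t), φ(t))|, i.e. Π maps forward horizontal curves on W₂ to forward horizontal curves on M₂. -/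

import Mathlib

/-- First component of the projection map π : (−π/2, π/2)² → ℝ². -/
noncomputable def pi1 (a c α β : ℝ) : ℝ :=
  (a + c) * Real.sin α / (a + Real.cos α * Real.cos β)

/-- Second component of the projection map π : (−π/2, π/2)² → ℝ². -/
noncomputable def pi2 (a c α β : ℝ) : ℝ :=
  (a + c) * Real.cos α * Real.sin β / (a + Real.cos α * Real.cos β)

/-- π̇¹(α, β, φ) = (∂π¹/∂α) cos φ + (∂π¹/∂β) sin φ / cos α. -/
noncomputable def pidot1 (a c α β φ : ℝ) : ℝ :=
  deriv (fun s => pi1 a c s β) α * Real.cos φ +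
    deriv (fun s => pi1 a c α s) β * Real.sin φ / Real.cos α

/-- π̇²(α, β, φ) = (∂π²/∂α) cos φ + (∂π²/∂β) sin φ / cos α. -/
noncomputable def pidot2 (a c α β φ : ℝ) : ℝ :=
  deriv (fun s => pi2 a c s β) α * Real.cos φ +
    deriv (fun s => pi2 a c α s) β * Real.sin φ / Real.cos α

/-- The complex number π̇¹ + i·π̇². -/
noncomputable def pidotC (a c α β φ : ℝ) : ℂ :=
  (pidot1 a c α β φ : ℂ) + (pidot2 a c α β φ : ℂ) * Complex.I

/-- Membership in the coordinate domain (−π/2, π/2)². -/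
def InDom (α β : ℝ) : Prop :=
  α ∈ Set.Ioo (-(Real.pi / 2)) (Real.pi / 2) ∧ β ∈ Set.Ioo (-(Real.pi / 2)) (Real.pi / 2)

/-- The C¹ curve t ↦ (α(t), β(t), φ(t)), with witness c¹, is a forward horizontal
curve on W₂ in coordinates: c¹ is continuous and positive, α' = c¹ cos φ and
β' = c¹ sin φ / cos α. -/
def IsFwdHorW2 (α β φ c1 : ℝ → ℝ) : Prop :=
  ContDiff ℝ 1 α ∧ ContDiff ℝ 1 β ∧ ContDiff ℝ 1 φ ∧
  Continuous c1 ∧ (∀ t, 0 < c1 t) ∧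
  (∀ t, HasDerivAt α (c1 t * Real.cos (φ t)) t) ∧
  (∀ t, HasDerivAt β (c1 t * Real.sin (φ t) / Real.cos (α t)) t)

/-- The map Π(α, β, φ) := (π(α, β), arg(π̇¹ + i·π̇²)). -/
noncomputable def PiMap (a c α β φ : ℝ) : (ℝ × ℝ) × ℝ :=
  ((pi1 a c α β, pi2 a c α β), Complex.arg (pidotC a c α β φ))

/- ### Auxiliary lemmas -/

lemma hd_pi1_a (a c β α : ℝ) (h : a + Real.cos α * Real.cos β ≠ 0) :
    HasDerivAt (fun s => pi1 a c s β)
      ((a + c) * (Real.cos α * (a + Real.cos α * Real.cos β)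
        + Real.sin α ^ 2 * Real.cos β) / (a + Real.cos α * Real.cos β) ^ 2) α := by
  have h1 : HasDerivAt (fun s => (a + c) * Real.sin s) ((a + c) * Real.cos α) α :=
    (Real.hasDerivAt_sin α).const_mul _
  have h2 : HasDerivAt (fun s => a + Real.cos s * Real.cos β)
      (-Real.sin α * Real.cos β) α :=
    ((Real.hasDerivAt_cos α).mul_const _).const_add _
  exact (h1.div h2 h).congr_deriv (by ring)

lemma hd_pi1_b (a c α β : ℝ) (h : a + Real.cos α * Real.cos β ≠ 0) :
    HasDerivAt (fun s => pi1 a c α s)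
      ((a + c) * Real.sin α * (Real.cos α * Real.sin β)
        / (a + Real.cos α * Real.cos β) ^ 2) β := by
  have h1 : HasDerivAt (fun _ : ℝ => (a + c) * Real.sin α) 0 β := hasDerivAt_const _ _
  have h2 : HasDerivAt (fun s => a + Real.cos α * Real.cos s)
      (Real.cos α * -Real.sin β) β :=
    ((Real.hasDerivAt_cos β).const_mul _).const_add _
  exact (h1.div h2 h).congr_deriv (by ring)

lemma hd_pi2_a (a c β α : ℝ) (h : a + Real.cos α * Real.cos β ≠ 0) :
    HasDerivAt (fun s => pi2 a c s β)
      (-(a * (a + c)) * (Real.sin α * Real.sin β)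
        / (a + Real.cos α * Real.cos β) ^ 2) α := by
  have h1 : HasDerivAt (fun s => (a + c) * Real.cos s * Real.sin β)
      ((a + c) * -Real.sin α * Real.sin β) α :=
    ((Real.hasDerivAt_cos α).const_mul _).mul_const _
  have h2 : HasDerivAt (fun s => a + Real.cos s * Real.cos β)
      (-Real.sin α * Real.cos β) α :=
    ((Real.hasDerivAt_cos α).mul_const _).const_add _
  exact (h1.div h2 h).congr_deriv (by ring)

lemma hd_pi2_b (a c α β : ℝ) (h : a + Real.cos α * Real.cos β ≠ 0) :
    HasDerivAt (fun s => pi2 a c α s)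
      ((a + c) * Real.cos α * (Real.cos β * (a + Real.cos α * Real.cos β)
        + Real.cos α * Real.sin β ^ 2) / (a + Real.cos α * Real.cos β) ^ 2) β := by
  have h1 : HasDerivAt (fun s => (a + c) * Real.cos α * Real.sin s)
      ((a + c) * Real.cos α * Real.cos β) β :=
    (Real.hasDerivAt_sin β).const_mul _
  have h2 : HasDerivAt (fun s => a + Real.cos α * Real.cos s)
      (Real.cos α * -Real.sin β) β :=
    ((Real.hasDerivAt_cos β).const_mul _).const_add _
  exact (h1.div h2 h).congr_deriv (by ring)

lemma pidot1_eq (a c α β φ : ℝ) (h : a + Real.cos α * Real.cos β ≠ 0) :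
    pidot1 a c α β φ =
      (a + c) * (Real.cos α * (a + Real.cos α * Real.cos β)
        + Real.sin α ^ 2 * Real.cos β) / (a + Real.cos α * Real.cos β) ^ 2 * Real.cos φ +
      (a + c) * Real.sin α * (Real.cos α * Real.sin β)
        / (a + Real.cos α * Real.cos β) ^ 2 * Real.sin φ / Real.cos α := by
  rw [pidot1, (hd_pi1_a a c β α h).deriv, (hd_pi1_b a c α β h).deriv]

lemma pidot2_eq (a c α β φ : ℝ) (h : a + Real.cos α * Real.cos β ≠ 0) :
    pidot2 a c α β φ =
      -(a * (a + c)) * (Real.sin α * Real.sin β)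
        / (a + Real.cos α * Real.cos β) ^ 2 * Real.cos φ +
      (a + c) * Real.cos α * (Real.cos β * (a + Real.cos α * Real.cos β)
        + Real.cos α * Real.sin β ^ 2) / (a + Real.cos α * Real.cos β) ^ 2
        * Real.sin φ / Real.cos α := by
  rw [pidot2, (hd_pi2_a a c β α h).deriv, (hd_pi2_b a c α β h).deriv]

/-- The map Π(α, β, φ) := (π(α, β), arg(π̇¹ + i·π̇²)) satisfies:
(a) its spatial component equals π(α, β); and (b) it maps forward horizontal curves
on W₂ to forward horizontal curves on M₂, with the positive continuous function
r(t) = c¹(t)·|(π̇¹, π̇²)(α(t), β(t), φ(t))|. -/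
theorem stmt1 (a c : ℝ) (ha : 0 < a) (hc : 0 < c)
    (hne : ∀ α β φ : ℝ, InDom α β →
      (pidot1 a c α β φ, pidot2 a c α β φ) ≠ (0, 0)) :
    -- (a): the spatial component of Π equals π
    (∀ α β φ : ℝ, (PiMap a c α β φ).1 = (pi1 a c α β, pi2 a c α β)) ∧
    -- (b): Π maps forward horizontal curves on W₂ to forward horizontal curves on M₂
    (∀ α β φ c1 : ℝ → ℝ, IsFwdHorW2 α β φ c1 → (∀ t, InDom (α t) (β t)) →
      (Continuous fun t => c1 t * ‖pidotC a c (α t) (β t) (φ t)‖) ∧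
      (∀ t, 0 < c1 t * ‖pidotC a c (α t) (β t) (φ t)‖) ∧
      (∀ t, HasDerivAt (fun s => (PiMap a c (α s) (β s) (φ s)).1.1)
        (c1 t * ‖pidotC a c (α t) (β t) (φ t)‖ *
          Real.cos ((PiMap a c (α t) (β t) (φ t)).2)) t) ∧
      (∀ t, HasDerivAt (fun s => (PiMap a c (α s) (β s) (φ s)).1.2)
        (c1 t * ‖pidotC a c (α t) (β t) (φ t)‖ *
          Real.sin ((PiMap a c (α t) (β t) (φ t)).2)) t)) := by
  constructor
  · intro α β φ; rfl
  intro α β φ c1 hW hdom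
  obtain ⟨hα, hβ, hφ, hc1, hc1pos, hα', hβ'⟩ := hW
  have hcosα : ∀ t, 0 < Real.cos (α t) := fun t => Real.cos_pos_of_mem_Ioo (hdom t).1
  have hcosβ : ∀ t, 0 < Real.cos (β t) := fun t => Real.cos_pos_of_mem_Ioo (hdom t).2
  have hcosαne : ∀ t, Real.cos (α t) ≠ 0 := fun t => (hcosα t).ne'
  have hDpos : ∀ t, 0 < a + Real.cos (α t) * Real.cos (β t) :=
    fun t => add_pos ha (mul_pos (hcosα t) (hcosβ t))
  have hDne : ∀ t, a + Real.cos (α t) * Real.cos (β t) ≠ 0 := fun t => (hDpos t).ne'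
  have hz : ∀ t, pidotC a c (α t) (β t) (φ t) ≠ 0 := by
    intro t h0
    apply hne (α t) (β t) (φ t) (hdom t)
    have hre := congrArg Complex.re h0
    have him := congrArg Complex.im h0
    simp [pidotC] at hre him
    simp [Prod.ext_iff, hre, him]
  have hαc : Continuous α := hα.continuous
  have hβc : Continuous β := hβ.continuous
  have hφc : Continuous φ := hφ.continuous
  have hDcont : Continuous fun t => a + Real.cos (α t) * Real.cos (β t) := by fun_prop
  have hD2ne : ∀ t, (a + Real.cos (α t) * Real.cos (β t)) ^ 2 ≠ 0 :=
    fun t => pow_ne_zero 2 (hDne t)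
  have hre_cont : Continuous fun t => pidot1 a c (α t) (β t) (φ t) := by
    have heq : (fun t => pidot1 a c (α t) (β t) (φ t)) = fun t =>
        (a + c) * (Real.cos (α t) * (a + Real.cos (α t) * Real.cos (β t))
          + Real.sin (α t) ^ 2 * Real.cos (β t))
          / (a + Real.cos (α t) * Real.cos (β t)) ^ 2 * Real.cos (φ t) +
        (a + c) * Real.sin (α t) * (Real.cos (α t) * Real.sin (β t))
          / (a + Real.cos (α t) * Real.cos (β t)) ^ 2 * Real.sin (φ t)
          / Real.cos (α t) :=
      funext fun t => pidot1_eq a c (α t) (β t) (φ t) (hDne t)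
    rw [heq]
    exact (((Continuous.div (by fun_prop) (hDcont.pow 2) hD2ne).mul (by fun_prop))).add
      ((((Continuous.div (by fun_prop) (hDcont.pow 2) hD2ne).mul (by fun_prop))).div
        (by fun_prop) hcosαne)
  have him_cont : Continuous fun t => pidot2 a c (α t) (β t) (φ t) := by
    have heq : (fun t => pidot2 a c (α t) (β t) (φ t)) = fun t =>
        -(a * (a + c)) * (Real.sin (α t) * Real.sin (β t))
          / (a + Real.cos (α t) * Real.cos (β t)) ^ 2 * Real.cos (φ t) +
        (a + c) * Real.cos (α t) * (Real.cos (β t) * (a + Real.cos (α t) * Real.cos (β t))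
          + Real.cos (α t) * Real.sin (β t) ^ 2)
          / (a + Real.cos (α t) * Real.cos (β t)) ^ 2 * Real.sin (φ t)
          / Real.cos (α t) :=
      funext fun t => pidot2_eq a c (α t) (β t) (φ t) (hDne t)
    rw [heq]
    exact (((Continuous.div (by fun_prop) (hDcont.pow 2) hD2ne).mul (by fun_prop))).add
      ((((Continuous.div (by fun_prop) (hDcont.pow 2) hD2ne).mul (by fun_prop))).div
        (by fun_prop) hcosαne)
  have hzc : Continuous fun t => pidotC a c (α t) (β t) (φ t) := by
    simp only [pidotC]
    exact (Complex.continuous_ofReal.comp hre_cont).add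
      ((Complex.continuous_ofReal.comp him_cont).mul continuous_const)
  have habs : Continuous fun t => ‖pidotC a c (α t) (β t) (φ t)‖ :=
    hzc.norm
  refine ⟨hc1.mul habs, fun t => mul_pos (hc1pos t) (norm_pos_iff.mpr (hz t)), ?_, ?_⟩
  · intro t
    show HasDerivAt (fun s => pi1 a c (α s) (β s)) _ t
    have key : c1 t * ‖pidotC a c (α t) (β t) (φ t)‖ *
        Real.cos ((PiMap a c (α t) (β t) (φ t)).2) =
        c1 t * pidot1 a c (α t) (β t) (φ t) := by
      show c1 t * ‖pidotC a c (α t) (β t) (φ t)‖ *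
        Real.cos (Complex.arg (pidotC a c (α t) (β t) (φ t))) = _
      rw [mul_assoc, Complex.norm_mul_cos_arg]
      simp [pidotC]
    rw [key, pidot1_eq a c (α t) (β t) (φ t) (hDne t)]
    have hnum : HasDerivAt (fun s => (a + c) * Real.sin (α s))
        ((a + c) * (Real.cos (α t) * (c1 t * Real.cos (φ t)))) t :=
      ((Real.hasDerivAt_sin (α t)).comp t (hα' t)).const_mul _
    have hden : HasDerivAt (fun s => a + Real.cos (α s) * Real.cos (β s))
        (-Real.sin (α t) * (c1 t * Real.cos (φ t)) * Real.cos (β t) +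
          Real.cos (α t) * (-Real.sin (β t) * (c1 t * Real.sin (φ t) / Real.cos (α t)))) t :=
      (((Real.hasDerivAt_cos (α t)).comp t (hα' t)).mul
        ((Real.hasDerivAt_cos (β t)).comp t (hβ' t))).const_add a
    refine (hnum.div hden (hDne t)).congr_deriv ?_
    have h1 := hDne t
    have h2 := hcosαne t
    field_simp
    ring
  · intro t
    show HasDerivAt (fun s => pi2 a c (α s) (β s)) _ t
    have key : c1 t * ‖pidotC a c (α t) (β t) (φ t)‖ *
        Real.sin ((PiMap a c (α t) (β t) (φ t)).2) =
        c1 t * pidot2 a c (α t) (β t) (φ t) := by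
      show c1 t * ‖pidotC a c (α t) (β t) (φ t)‖ *
        Real.sin (Complex.arg (pidotC a c (α t) (β t) (φ t))) = _
      rw [mul_assoc, Complex.norm_mul_sin_arg]
      simp [pidotC]
    rw [key, pidot2_eq a c (α t) (β t) (φ t) (hDne t)]
    have hnum : HasDerivAt (fun s => (a + c) * Real.cos (α s) * Real.sin (β s))
        (((a + c) * (-Real.sin (α t) * (c1 t * Real.cos (φ t)))) * Real.sin (β t) +
          ((a + c) * Real.cos (α t)) *
            (Real.cos (β t) * (c1 t * Real.sin (φ t) / Real.cos (α t)))) t :=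
      ((((Real.hasDerivAt_cos (α t)).comp t (hα' t)).const_mul (a + c)).mul
        ((Real.hasDerivAt_sin (β t)).comp t (hβ' t)))
    have hden : HasDerivAt (fun s => a + Real.cos (α s) * Real.cos (β s))
        (-Real.sin (α t) * (c1 t * Real.cos (φ t)) * Real.cos (β t) +
          Real.cos (α t) * (-Real.sin (β t) * (c1 t * Real.sin (φ t) / Real.cos (α t)))) t :=
      (((Real.hasDerivAt_cos (α t)).comp t (hα' t)).mul
        ((Real.hasDerivAt_cos (β t)).comp t (hβ' t))).const_add a
    refine (hnum.div hden (hDne t)).congr_deriv ?_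
    have h1 := hDne t
    have h2 := hcosαne t
    field_simp
    ring
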